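/- Let n ∈ ℕ, d ∈ ℕ₀, and let ρ : ℝⁿ → [0,∞) be a nonnegative measurable kernel such that ∫_{ℝⁿ} y^α ρ(y) dy is finite for all multi-indices α with |α| ≤ d. If p ∈ ℝ[x₁,…,xₙ] with deg p ≤ d is a sum of squares of polynomials, then the convolution (p ∗ ρ)(x) = ∫_{ℝⁿ} p(x−y) ρ(y) dy is again (the function of) a sum of squares of polynomials of degree at most d. -/

import Mathlib

open MeasureTheory MvPolynomial

-- L1: integrability of polynomial * kernel
lemma integ_poly {n d : ℕ} (ρ : (Fin n → ℝ) → ℝ)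
    (hmom : ∀ α : Fin n → ℕ, (∑ i, α i) ≤ d →
      Integrable (fun y : Fin n → ℝ => (∏ i, y i ^ α i) * ρ y))
    (g : MvPolynomial (Fin n) ℝ) (hg : g.totalDegree ≤ d) :
    Integrable (fun y : Fin n → ℝ => eval y g * ρ y) := by
  have : (fun y : Fin n → ℝ => eval y g * ρ y)
      = fun y => ∑ α ∈ g.support, coeff α g * ((∏ i, y i ^ α i) * ρ y) := by
    funext y
    rw [eval_eq']
    rw [Finset.sum_mul]
    congr 1; funext α; ring
  rw [this]
  apply integrable_finset_sum
  intro α hα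
  refine (hmom α ?_).const_mul _
  have h1 : (∑ i, α i) = α.sum fun _ e => e := (Finsupp.sum_fintype α (fun _ e => e) (fun _ => rfl)).symm
  rw [h1]
  exact le_trans (le_totalDegree hα) hg

lemma degree_add' {σ : Type*} (a b : σ →₀ ℕ) :
    (a + b).degree = a.degree + b.degree := by
  simp [Finsupp.degree_eq_weight_one, map_add]

lemma sum_eq_degree {σ : Type*} (a : σ →₀ ℕ) : (a.sum fun _ e => e) = a.degree := rfl

lemma totalDegree_eq_sup_degree {σ : Type*} {R : Type*} [CommSemiring R] (p : MvPolynomial σ R) :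
    p.totalDegree = p.support.sup Finsupp.degree := rfl

-- leading homogeneous component nonzero
lemma hc_top_ne_zero {σ : Type*} {R : Type*} [CommRing R] {g : MvPolynomial σ R} (hg : g ≠ 0) :
    homogeneousComponent g.totalDegree g ≠ 0 := by
  classical
  obtain ⟨β, hβmem, hβ⟩ := Finset.exists_mem_eq_sup _ (support_nonempty.mpr hg) Finsupp.degree
  intro h
  have hc : coeff β (homogeneousComponent g.totalDegree g) = coeff β g := by
    rw [coeff_homogeneousComponent, if_pos]
    rw [totalDegree_eq_sup_degree, hβ]
  rw [h, coeff_zero] at hc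
  exact (mem_support_iff.mp hβmem) hc.symm

-- coeff of square at top
lemma hc_sq {σ : Type*} [DecidableEq σ] {g : MvPolynomial σ ℝ} {D : ℕ} (hg : g.totalDegree ≤ D) :
    homogeneousComponent (2 * D) (g ^ 2) = (homogeneousComponent D g) ^ 2 := by
  ext β
  rw [coeff_homogeneousComponent]
  rw [pow_two, pow_two, coeff_mul, coeff_mul]
  split_ifs with hβ
  · apply Finset.sum_congr rfl
    intro x hx
    rw [Finset.HasAntidiagonal.mem_antidiagonal] at hx
    have hdeg : x.1.degree + x.2.degree = 2 * D := by rw [← degree_add', hx, hβ]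
    by_cases h1 : x.1.degree = D
    · have h2 : x.2.degree = D := by omega
      rw [coeff_homogeneousComponent, coeff_homogeneousComponent, if_pos h1, if_pos h2]
    · -- one of the degrees exceeds D
      rcases lt_or_gt_of_ne h1 with h | h
      · have h2 : x.2.degree > D := by omega
        have : coeff x.2 g = 0 :=
          coeff_eq_zero_of_totalDegree_lt (lt_of_le_of_lt hg (show D < x.2.degree by omega))
        rw [this, coeff_homogeneousComponent (d := x.2), if_neg (by omega), mul_zero, mul_zero]
      · have : coeff x.1 g = 0 :=
          coeff_eq_zero_of_totalDegree_lt (lt_of_le_of_lt hg (show D < x.1.degree by omega))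
        rw [this, coeff_homogeneousComponent (d := x.1), if_neg (by omega), zero_mul, zero_mul]
  · -- β.degree ≠ 2D : RHS coeff is 0
    symm
    apply Finset.sum_eq_zero
    intro x hx
    rw [Finset.HasAntidiagonal.mem_antidiagonal] at hx
    by_cases h1 : x.1.degree = D
    · by_cases h2 : x.2.degree = D
      · exfalso; apply hβ; rw [← hx, degree_add', h1, h2]; ring
      · rw [coeff_homogeneousComponent (d := x.2), if_neg h2, mul_zero]
    · rw [coeff_homogeneousComponent (d := x.1), if_neg h1, zero_mul]

lemma isSumSq_list {A : Type*} [AddMonoid A] [Mul A] {p : A} (h : IsSumSq p) :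
    ∃ L : List A, p = (L.map (fun a => a * a)).sum := by
  induction h with
  | zero => exact ⟨[], rfl⟩
  | sq_add a _ ih =>
    obtain ⟨L, rfl⟩ := ih
    exact ⟨a :: L, by simp⟩

lemma foldr_max_le_mem (L : List ℕ) (a : ℕ) (ha : a ∈ L) : a ≤ L.foldr max 0 := by
  induction L with
  | nil => simp at ha
  | cons b t ih =>
    rcases List.mem_cons.mp ha with rfl | h
    · exact le_max_left _ _
    · exact le_trans (ih h) (le_max_right _ _)

lemma foldr_max_mem (L : List ℕ) : L.foldr max 0 = 0 ∨ L.foldr max 0 ∈ L := by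
  induction L with
  | nil => left; rfl
  | cons b t ih =>
    rcases le_or_gt (t.foldr max 0) b with h | h
    · right
      have : (b :: t).foldr max 0 = b := by simp [max_eq_left h]
      rw [this]; exact List.mem_cons_self
    · have hv : (b :: t).foldr max 0 = t.foldr max 0 := by simp [max_eq_right h.le]
      rcases ih with h0 | hmem
      · omega
      · right; rw [hv]; exact List.mem_cons_of_mem _ hmem

lemma sq_deg_le {n d : ℕ} (L : List (MvPolynomial (Fin n) ℝ))
    (hd : ((L.map (fun a => a * a)).sum).totalDegree ≤ d) :
    ∀ g ∈ L, 2 * g.totalDegree ≤ d := by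
  classical
  by_contra hcon
  push_neg at hcon
  obtain ⟨g0, hg0L, hg0⟩ := hcon
  set D := (L.map totalDegree).foldr max 0 with hDdef
  have hDle : ∀ g ∈ L, g.totalDegree ≤ D := fun g hg =>
    foldr_max_le_mem _ _ (List.mem_map_of_mem hg)
  have h2D : d < 2 * D := lt_of_lt_of_le hg0 (by have := hDle g0 hg0L; omega)
  have hDpos : 0 < D := by omega
  obtain ⟨g1, hg1L, hg1D⟩ : ∃ g1 ∈ L, g1.totalDegree = D := by
    rcases foldr_max_mem (L.map totalDegree) with h0 | hmem
    · omega
    · obtain ⟨g1, hg1, he⟩ := List.mem_map.mp hmem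
      exact ⟨g1, hg1, he⟩
  have hg1ne : g1 ≠ 0 := by
    intro h; rw [h] at hg1D; simp [totalDegree_zero] at hg1D; omega
  -- top homogeneous component of the sum vanishes
  have hsum0 : (L.map fun b => homogeneousComponent D b * homogeneousComponent D b).sum = 0 := by
    have h1 : homogeneousComponent (2 * D) ((L.map (fun a => a * a)).sum) = 0 :=
      homogeneousComponent_eq_zero _ _ (lt_of_le_of_lt hd h2D)
    rw [map_list_sum, List.map_map] at h1
    rw [← h1]
    congr 1
    apply List.map_congr_left
    intro a ha
    have := hc_sq (g := a) (D := D) (hDle a ha)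
    rw [pow_two, pow_two] at this
    exact (congrArg id this).symm
  have hzero : ∀ a ∈ L, homogeneousComponent D a = 0 := by
    intro a ha
    apply MvPolynomial.funext
    intro x
    rw [map_zero]
    have hx : (L.map fun b => (eval x (homogeneousComponent D b))^2).sum = 0 := by
      have := congrArg (eval x) hsum0
      rw [map_zero, map_list_sum, List.map_map] at this
      rw [← this]
      congr 1
      apply List.map_congr_left
      intro b _
      simp [pow_two]
    have hmem : (eval x (homogeneousComponent D a))^2 ∈
        L.map fun b => (eval x (homogeneousComponent D b))^2 :=
      List.mem_map_of_mem ha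
    have hle := List.single_le_sum (l := L.map fun b => (eval x (homogeneousComponent D b))^2)
      (fun r hr => by
        obtain ⟨b, _, rfl⟩ := List.mem_map.mp hr
        positivity) _ hmem
    rw [hx] at hle
    have h0 : (eval x (homogeneousComponent D a))^2 = 0 := le_antisymm hle (by positivity)
    exact pow_eq_zero_iff (by norm_num) |>.mp h0
  have := hzero g1 hg1L
  rw [← hg1D] at this
  exact hc_top_ne_zero hg1ne this

variable {n : ℕ}


abbrev Rp (n : ℕ) := MvPolynomial (Fin n) ℝ

/-- coefficientwise degree bound -/
def CoeffDegLe (P : MvPolynomial (Fin n) (Rp n)) (k : ℕ) : Prop :=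
  ∀ β, (coeff β P).totalDegree ≤ k

lemma CoeffDegLe.mono {P : MvPolynomial (Fin n) (Rp n)} {k l : ℕ} (h : CoeffDegLe P k)
    (hkl : k ≤ l) : CoeffDegLe P l := fun β => (h β).trans hkl

lemma coeffDegLe_C (c : Rp n) (k : ℕ) (hc : c.totalDegree ≤ k) : CoeffDegLe (C c) k := by
  intro β
  rw [coeff_C]
  split_ifs with h
  · exact hc
  · simp

lemma coeffDegLe_X (i : Fin n) : CoeffDegLe (X i : MvPolynomial (Fin n) (Rp n)) 0 := by
  intro β
  rw [coeff_X']
  split_ifs <;> simp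

lemma CoeffDegLe.sub {P Q : MvPolynomial (Fin n) (Rp n)} {k : ℕ}
    (hP : CoeffDegLe P k) (hQ : CoeffDegLe Q k) : CoeffDegLe (P - Q) k := by
  intro β
  rw [coeff_sub, sub_eq_add_neg]
  refine le_trans (totalDegree_add _ _) (max_le (hP β) ?_)
  rw [totalDegree_neg]
  exact hQ β

lemma CoeffDegLe.mul {P Q : MvPolynomial (Fin n) (Rp n)} {k l : ℕ}
    (hP : CoeffDegLe P k) (hQ : CoeffDegLe Q l) : CoeffDegLe (P * Q) (k + l) := by
  intro β
  rw [coeff_mul]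
  refine le_trans (totalDegree_finset_sum _ _) (Finset.sup_le fun x _ => ?_)
  exact le_trans (totalDegree_mul _ _) (add_le_add (hP x.1) (hQ x.2))

lemma CoeffDegLe.pow {P : MvPolynomial (Fin n) (Rp n)} {k : ℕ} (hP : CoeffDegLe P k) (m : ℕ) :
    CoeffDegLe (P ^ m) (m * k) := by
  induction m with
  | zero => simpa using coeffDegLe_C 1 0 (by simp)
  | succ m ih =>
    rw [pow_succ]
    have := ih.mul hP
    simpa [add_mul] using this


lemma coeffDegLe_prod {ι : Type*} [DecidableEq ι] (s : Finset ι)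
    (P : ι → MvPolynomial (Fin n) (Rp n)) (k : ι → ℕ)
    (h : ∀ i ∈ s, CoeffDegLe (P i) (k i)) :
    CoeffDegLe (∏ i ∈ s, P i) (∑ i ∈ s, k i) := by
  induction s using Finset.induction_on with
  | empty => simpa using coeffDegLe_C 1 0 (by simp)
  | @insert a s' hx ih =>
    rw [Finset.prod_insert hx, Finset.sum_insert hx]
    exact (h a (Finset.mem_insert_self a s')).mul (ih fun i hi => h i (Finset.mem_insert_of_mem hi))

lemma coeffDegLe_sum {ι : Type*} (s : Finset ι)
    (P : ι → MvPolynomial (Fin n) (Rp n)) (k : ℕ)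
    (h : ∀ i ∈ s, CoeffDegLe (P i) k) :
    CoeffDegLe (∑ i ∈ s, P i) k := by
  intro β
  rw [coeff_sum]
  exact le_trans (totalDegree_finset_sum _ _) (Finset.sup_le fun i hi => h i hi β)

/-- The double-variable expansion of `a(x - y)`. -/
noncomputable def expand2 (a : Rp n) : MvPolynomial (Fin n) (Rp n) :=
  aeval (fun i => X i - C (X i)) a

lemma expand2_eval (a : Rp n) (x y : Fin n → ℝ) :
    eval x (map (eval y) (expand2 a)) = eval (x - y) a := by
  have hhom : ((eval x).comp ((map (eval y)).comp
      ((aeval (fun i => X i - C (X i)) : Rp n →ₐ[ℝ] MvPolynomial (Fin n) (Rp n)) :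
        Rp n →+* MvPolynomial (Fin n) (Rp n)))) = (eval (x - y) : Rp n →+* ℝ) := by
    apply ringHom_ext
    · intro r
      simp
    · intro i
      simp [Pi.sub_apply]
  exact RingHom.congr_fun hhom a

lemma algebraMap_expand2_eq (r : ℝ) :
    (algebraMap ℝ (MvPolynomial (Fin n) (Rp n)) r) = C (C r) := rfl

lemma base_totalDegree_le (i : Fin n) :
    ((X i - C (X i) : MvPolynomial (Fin n) (Rp n))).totalDegree ≤ 1 := by
  rw [sub_eq_add_neg]
  refine le_trans (totalDegree_add _ _) (max_le (by simp [totalDegree_X]) ?_)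
  rw [totalDegree_neg, totalDegree_C]
  omega

lemma expand2_totalDegree_le (a : Rp n) : (expand2 a).totalDegree ≤ a.totalDegree := by
  rw [expand2]
  conv_lhs => rw [a.as_sum]
  rw [map_sum]
  refine totalDegree_finsetSum_le fun α hα => ?_
  rw [aeval_monomial]
  refine le_trans (totalDegree_mul _ _) ?_
  have h1 : (algebraMap ℝ (MvPolynomial (Fin n) (Rp n)) (coeff α a)).totalDegree = 0 := by
    rw [algebraMap_expand2_eq, totalDegree_C]
  rw [h1, zero_add, Finsupp.prod]
  refine le_trans (totalDegree_finset_prod _ _) ?_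
  refine le_trans (Finset.sum_le_sum fun i _ => ?_) (le_totalDegree hα)
  calc ((X i - C (X i) : MvPolynomial (Fin n) (Rp n)) ^ α i).totalDegree
      ≤ α i * ((X i - C (X i) : MvPolynomial (Fin n) (Rp n))).totalDegree := totalDegree_pow _ _
    _ ≤ α i * 1 := Nat.mul_le_mul_left _ (base_totalDegree_le i)
    _ = α i := by omega

lemma base_coeffDegLe (i : Fin n) :
    CoeffDegLe (X i - C (X i) : MvPolynomial (Fin n) (Rp n)) 1 :=
  ((coeffDegLe_X i).mono (by omega)).sub (coeffDegLe_C (X i) 1 (by simp [totalDegree_X]))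

lemma expand2_coeffDegLe (a : Rp n) : CoeffDegLe (expand2 a) a.totalDegree := by
  classical
  rw [expand2]
  conv_lhs => rw [a.as_sum]
  rw [map_sum]
  refine coeffDegLe_sum _ _ _ fun α hα => ?_
  rw [aeval_monomial, algebraMap_expand2_eq, Finsupp.prod]
  have h1 : CoeffDegLe (∏ i ∈ α.support, (X i - C (X i) : MvPolynomial (Fin n) (Rp n)) ^ α i)
      (∑ i ∈ α.support, α i) := by
    refine coeffDegLe_prod _ _ _ fun i _ => ?_
    simpa using (base_coeffDegLe i).pow (α i)
  have h2 := (coeffDegLe_C (C (coeff α a)) 0 (by simp)).mul h1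
  rw [zero_add] at h2
  exact h2.mono (le_totalDegree hα)


lemma key_expansion (a : Rp n) (x y : Fin n → ℝ) :
    eval (x - y) a = ∑ β ∈ (expand2 a).support,
      eval y (coeff β (expand2 a)) * ∏ i, x i ^ β i := by
  rw [← expand2_eval a x y, eval_eq',
    Finset.sum_subset (support_map_subset _ _) (fun β _ hn => by
      rw [notMem_support_iff.mp hn, zero_mul])]
  exact Finset.sum_congr rfl fun β _ => by rw [coeff_map]

lemma shift_repr (a : Rp n) (x : Fin n → ℝ) :
    ∃ S : Rp n, S.totalDegree ≤ a.totalDegree ∧ ∀ y, eval (x - y) a = eval y S := by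
  refine ⟨∑ β ∈ (expand2 a).support, C (∏ i, x i ^ β i) * coeff β (expand2 a), ?_, ?_⟩
  · refine totalDegree_finsetSum_le fun β _ => ?_
    refine le_trans (totalDegree_mul _ _) ?_
    rw [totalDegree_C, zero_add]
    exact expand2_coeffDegLe a β
  · intro y
    rw [key_expansion a x y, map_sum]
    refine Finset.sum_congr rfl fun β _ => ?_
    rw [map_mul, eval_C, mul_comm]

lemma integ_shift {d : ℕ} (ρ : (Fin n → ℝ) → ℝ)
    (hmom : ∀ α : Fin n → ℕ, (∑ i, α i) ≤ d →
      Integrable (fun y : Fin n → ℝ => (∏ i, y i ^ α i) * ρ y))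
    (g : Rp n) (hg : g.totalDegree ≤ d) (x : Fin n → ℝ) :
    Integrable (fun y : Fin n → ℝ => eval (x - y) g * ρ y) := by
  obtain ⟨S, hS, hSe⟩ := shift_repr g x
  have h : (fun y : Fin n → ℝ => eval (x - y) g * ρ y) = fun y => eval y S * ρ y := by
    funext y; rw [hSe]
  rw [h]
  exact integ_poly ρ hmom S (hS.trans hg)

lemma integ_shift_sq {d : ℕ} (ρ : (Fin n → ℝ) → ℝ)
    (hmom : ∀ α : Fin n → ℕ, (∑ i, α i) ≤ d →
      Integrable (fun y : Fin n → ℝ => (∏ i, y i ^ α i) * ρ y))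
    (a : Rp n) (ha : 2 * a.totalDegree ≤ d) (x : Fin n → ℝ) :
    Integrable (fun y : Fin n → ℝ => eval (x - y) a * eval (x - y) a * ρ y) := by
  obtain ⟨S, hS, hSe⟩ := shift_repr a x
  have h : (fun y : Fin n → ℝ => eval (x - y) a * eval (x - y) a * ρ y)
      = fun y => eval y (S * S) * ρ y := by
    funext y; rw [map_mul, ← hSe]
  rw [h]
  refine integ_poly ρ hmom _ (le_trans (totalDegree_mul _ _) ?_)
  omega

lemma single_sq {d : ℕ} (ρ : (Fin n → ℝ) → ℝ)
    (hmom : ∀ α : Fin n → ℕ, (∑ i, α i) ≤ d →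
      Integrable (fun y : Fin n → ℝ => (∏ i, y i ^ α i) * ρ y))
    (hρnonneg : ∀ y, 0 ≤ ρ y)
    (a : Rp n) (ha : 2 * a.totalDegree ≤ d) :
    ∃ q : Rp n, q.totalDegree ≤ d ∧ IsSumSq q ∧
      ∀ x : Fin n → ℝ,
        (∫ y : Fin n → ℝ, eval (x - y) a * eval (x - y) a * ρ y) = eval x q := by
  classical
  set F := expand2 a with hF
  set s := F.support with hs
  set G : (Fin n →₀ ℕ) → Rp n := fun β => coeff β F with hGdef
  have hGd : ∀ β, (G β).totalDegree ≤ a.totalDegree := fun β => expand2_coeffDegLe a β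
  have hint : ∀ β γ : Fin n →₀ ℕ, Integrable
      (fun y : Fin n → ℝ => eval y (G β) * eval y (G γ) * ρ y) := by
    intro β γ
    have h1 : (fun y : Fin n → ℝ => eval y (G β) * eval y (G γ) * ρ y)
        = fun y => eval y (G β * G γ) * ρ y := by funext y; rw [map_mul]
    rw [h1]
    refine integ_poly ρ hmom _ (le_trans (totalDegree_mul _ _) ?_)
    have h2 := hGd β
    have h3 := hGd γ
    omega
  set M : Matrix s s ℝ := fun β γ => ∫ y : Fin n → ℝ, eval y (G β) * eval y (G γ) * ρ y with hM
  have hquad : ∀ v : s → ℝ, ∑ β : s, ∑ γ : s, v β * v γ * M β γ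
      = ∫ y : Fin n → ℝ, (∑ β : s, v β * eval y (G ↑β))^2 * ρ y := by
    intro v
    have h1 : ∀ (y : Fin n → ℝ), (∑ β : s, v β * eval y (G ↑β))^2 * ρ y
        = ∑ β : s, ∑ γ : s, v β * v γ * (eval y (G ↑β) * eval y (G ↑γ) * ρ y) := by
      intro y
      rw [pow_two, Finset.sum_mul_sum, Finset.sum_mul]
      refine Finset.sum_congr rfl fun β _ => ?_
      rw [Finset.sum_mul]
      refine Finset.sum_congr rfl fun γ _ => ?_
      ring
    have h2 : (∫ y : Fin n → ℝ, (∑ β : s, v β * eval y (G ↑β))^2 * ρ y)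
        = ∫ y : Fin n → ℝ, ∑ β : s, ∑ γ : s,
            v β * v γ * (eval y (G ↑β) * eval y (G ↑γ) * ρ y) := by
      congr 1; funext y; exact h1 y
    rw [h2, integral_finset_sum _
      (fun (β : {x // x ∈ s}) _ =>
        integrable_finset_sum _ (fun (γ : {x // x ∈ s}) _ => (hint β.1 γ.1).const_mul _))]
    refine Finset.sum_congr rfl fun β _ => ?_
    rw [integral_finset_sum _ (fun (γ : {x // x ∈ s}) _ => (hint β.1 γ.1).const_mul _)]
    refine Finset.sum_congr rfl fun γ _ => ?_
    exact (integral_const_mul _ _).symm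
  have hMsymm : M.IsHermitian := by
    ext β γ
    simp only [Matrix.conjTranspose_apply, star_trivial, hM]
    show (∫ y : Fin n → ℝ, eval y (G ↑γ) * eval y (G ↑β) * ρ y) = _
    congr 1; funext y; ring
  have hpsd : M.PosSemidef := by
    refine Matrix.PosSemidef.of_dotProduct_mulVec_nonneg hMsymm fun v => ?_
    have h0 : dotProduct (star v) (M.mulVec v)
        = ∑ β : s, ∑ γ : s, v β * v γ * M β γ := by
      simp only [dotProduct, Matrix.mulVec, Pi.star_apply, star_trivial,
        Finset.mul_sum]
      refine Finset.sum_congr rfl fun β _ => Finset.sum_congr rfl fun γ _ => by ring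
    rw [h0, hquad]
    refine integral_nonneg fun y => ?_
    have := hρnonneg y
    positivity
  obtain ⟨B, hB⟩ : ∃ B : Matrix s s ℝ, M = B.conjTranspose * B := by
    open scoped MatrixOrder in exact CStarAlgebra.nonneg_iff_eq_star_mul_self.mp hpsd.nonneg
  have hBM : ∀ β γ : s, M β γ = ∑ k : s, B k β * B k γ := by
    intro β γ
    rw [hB]
    simp [Matrix.mul_apply, Matrix.conjTranspose_apply, star_trivial]
  set w : s → Rp n := fun k => ∑ β : s, C (B k β) * monomial (β : Fin n →₀ ℕ) 1 with hw
  have hwdeg : ∀ k : s, (w k).totalDegree ≤ a.totalDegree := by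
    intro k
    refine totalDegree_finsetSum_le fun β _ => ?_
    rw [C_mul_monomial]
    refine le_trans (totalDegree_monomial_le _ _) ?_
    exact le_trans (le_totalDegree β.2) (expand2_totalDegree_le a)
  refine ⟨∑ k : s, w k * w k, ?_, IsSumSq.sum_mul_self _ _, ?_⟩
  · refine totalDegree_finsetSum_le fun k _ => ?_
    refine le_trans (totalDegree_mul _ _) ?_
    have := hwdeg k
    omega
  · intro x
    set v : s → ℝ := fun β => ∏ i, x i ^ (β : Fin n →₀ ℕ) i with hv
    have hexp : ∀ y, eval (x - y) a = ∑ β : s, v β * eval y (G ↑β) := by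
      intro y
      rw [key_expansion a x y, ← Finset.sum_coe_sort]
      exact Finset.sum_congr rfl fun β _ => by rw [mul_comm]
    have h1 : (∫ y : Fin n → ℝ, eval (x - y) a * eval (x - y) a * ρ y)
        = ∑ β : s, ∑ γ : s, v β * v γ * M β γ := by
      rw [hquad v]
      congr 1; funext y; rw [hexp y, pow_two]
    rw [h1]
    have hevalw : ∀ k : s, eval x (w k) = ∑ β : s, B k β * v β := by
      intro k
      rw [hw, map_sum]
      refine Finset.sum_congr rfl fun β _ => ?_
      rw [map_mul, eval_C, eval_monomial, one_mul]
      congr 1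
      exact Finsupp.prod_fintype _ _ (fun i => pow_zero _)
    rw [map_sum]
    calc ∑ β : s, ∑ γ : s, v β * v γ * M β γ
        = ∑ β : s, ∑ γ : s, ∑ k : s, (B k β * v β) * (B k γ * v γ) := by
          refine Finset.sum_congr rfl fun β _ => Finset.sum_congr rfl fun γ _ => ?_
          rw [hBM β γ, Finset.mul_sum]
          exact Finset.sum_congr rfl fun k _ => by ring
      _ = ∑ β : s, ∑ k : s, ∑ γ : s, (B k β * v β) * (B k γ * v γ) :=
          Finset.sum_congr rfl fun β _ => Finset.sum_comm
      _ = ∑ k : s, ∑ β : s, ∑ γ : s, (B k β * v β) * (B k γ * v γ) :=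
          Finset.sum_comm
      _ = ∑ k : s, (∑ β : s, B k β * v β) * (∑ γ : s, B k γ * v γ) := by
          refine Finset.sum_congr rfl fun k _ => ?_
          rw [Finset.sum_mul_sum]
      _ = ∑ k : s, eval x (w k * w k) := by
          refine Finset.sum_congr rfl fun k _ => ?_
          rw [map_mul, hevalw k]

lemma list_sum_deg_le {d : ℕ} (l : List (Rp n)) (h : ∀ p ∈ l, p.totalDegree ≤ d) :
    l.sum.totalDegree ≤ d := by
  induction l with
  | nil => simp
  | cons a t ih =>
    rw [List.sum_cons]
    exact le_trans (totalDegree_add _ _) (max_le (h a (List.mem_cons_self))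
      (ih fun p hp => h p (List.mem_cons_of_mem _ hp)))

lemma conv_list {d : ℕ} (ρ : (Fin n → ℝ) → ℝ)
    (hmom : ∀ α : Fin n → ℕ, (∑ i, α i) ≤ d →
      Integrable (fun y : Fin n → ℝ => (∏ i, y i ^ α i) * ρ y))
    (hρnonneg : ∀ y, 0 ≤ ρ y) :
    ∀ L : List (Rp n), (∀ g ∈ L, 2 * g.totalDegree ≤ d) →
    ∃ q : Rp n, q.totalDegree ≤ d ∧ IsSumSq q ∧ ∀ x : Fin n → ℝ,
      (∫ y : Fin n → ℝ, eval (x - y) ((L.map (fun b => b * b)).sum) * ρ y) = eval x q := by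
  intro L
  induction L with
  | nil =>
    intro _
    exact ⟨0, by simp, IsSumSq.zero, fun x => by simp⟩
  | cons a t ih =>
    intro hdeg
    obtain ⟨qt, hqt, hqts, hqte⟩ := ih (fun g hg => hdeg g (List.mem_cons_of_mem _ hg))
    obtain ⟨qa, hqa, hqas, hqae⟩ := single_sq ρ hmom hρnonneg a (hdeg a (List.mem_cons_self))
    have htdeg : ((t.map (fun b => b * b)).sum).totalDegree ≤ d := by
      refine list_sum_deg_le _ fun p hp => ?_
      obtain ⟨g, hg, rfl⟩ := List.mem_map.mp hp
      refine le_trans (totalDegree_mul _ _) ?_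
      have := hdeg g (List.mem_cons_of_mem _ hg)
      omega
    refine ⟨qa + qt, le_trans (totalDegree_add _ _) (max_le hqa hqt), hqas.add hqts, fun x => ?_⟩
    have hsplit : (fun y : Fin n → ℝ => eval (x - y) (((a :: t).map (fun b => b * b)).sum) * ρ y)
        = fun y => eval (x - y) a * eval (x - y) a * ρ y
            + eval (x - y) ((t.map (fun b => b * b)).sum) * ρ y := by
      funext y
      rw [List.map_cons, List.sum_cons, map_add, map_mul]
      ring
    rw [hsplit, integral_add (integ_shift_sq ρ hmom a (hdeg a (List.mem_cons_self)) x)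
      (integ_shift ρ hmom _ htdeg x), hqae, hqte, map_add]

/-- Convolution with a nonnegative kernel having finite moments up to degree `d` maps
sums of squares of degree at most `d` to sums of squares of degree at most `d`. -/
theorem sos_conv_kernel (n d : ℕ) (ρ : (Fin n → ℝ) → ℝ) (hρmeas : Measurable ρ)
    (hρnonneg : ∀ y, 0 ≤ ρ y)
    (hmom : ∀ α : Fin n → ℕ, (∑ i, α i) ≤ d →
      Integrable (fun y : Fin n → ℝ => (∏ i, y i ^ α i) * ρ y))
    (p : MvPolynomial (Fin n) ℝ) (hp : p.totalDegree ≤ d) (hsos : IsSumSq p) :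
    ∃ q : MvPolynomial (Fin n) ℝ, q.totalDegree ≤ d ∧ IsSumSq q ∧
      ∀ x : Fin n → ℝ,
        (∫ y : Fin n → ℝ, MvPolynomial.eval (x - y) p * ρ y) = MvPolynomial.eval x q := by
  obtain ⟨L, rfl⟩ := isSumSq_list hsos
  exact conv_list ρ hmom hρnonneg L (sq_deg_le L hp)
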